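/- Let n₁, n₂, p be positive integers, let M₁ ∈ ℝ^{n₁×p} and M₂ ∈ ℝ^{n₂×p} be matrices with M₁ᵀM₁ and M₂ᵀM₂ invertible, and let a₁ ∈ ℝ^{n₁}, a₂ ∈ ℝ^{n₂}. Then M₁ᵀM₁ + M₂ᵀM₂ is invertible and (a₁ᵀM₁ + a₂ᵀM₂)(M₁ᵀM₁ + M₂ᵀM₂)⁻¹(M₁ᵀa₁ + M₂ᵀa₂) ≤ a₁ᵀM₁(M₁ᵀM₁)⁻¹M₁ᵀa₁ + a₂ᵀM₂(M₂ᵀM₂)⁻¹M₂ᵀa₂. -/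

import Mathlib

open Matrix

private lemma dot_mulVec_left {m k : ℕ} (A : Matrix (Fin m) (Fin k) ℝ)
    (a : Fin k → ℝ) (w : Fin m → ℝ) : (A *ᵥ a) ⬝ᵥ w = a ⬝ᵥ (Aᵀ *ᵥ w) := by
  rw [← Matrix.vecMul_transpose, Matrix.dotProduct_mulVec]

private lemma dot_self_nonneg' {k : ℕ} (u : Fin k → ℝ) : 0 ≤ u ⬝ᵥ u :=
  Finset.sum_nonneg fun _ _ => mul_self_nonneg _

private lemma dot_le_sqrt {k : ℕ} (u v : Fin k → ℝ) :
    u ⬝ᵥ v ≤ Real.sqrt (u ⬝ᵥ u) * Real.sqrt (v ⬝ᵥ v) := by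
  have h : (u ⬝ᵥ v) ^ 2 ≤ (u ⬝ᵥ u) * (v ⬝ᵥ v) := by
    have := Finset.sum_mul_sq_le_sq_mul_sq Finset.univ u v
    simpa [dotProduct, sq] using this
  calc u ⬝ᵥ v ≤ |u ⬝ᵥ v| := le_abs_self _
    _ = Real.sqrt ((u ⬝ᵥ v) ^ 2) := (Real.sqrt_sq_eq_abs _).symm
    _ ≤ Real.sqrt ((u ⬝ᵥ u) * (v ⬝ᵥ v)) := Real.sqrt_le_sqrt h
    _ = _ := Real.sqrt_mul (dot_self_nonneg' u) _

private lemma posDef_of_isUnit {k : ℕ} {A : Matrix (Fin k) (Fin k) ℝ}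
    (hA : A.PosSemidef) (hu : IsUnit A) : A.PosDef := by
  refine Matrix.PosDef.of_dotProduct_mulVec_pos hA.1 fun x hx => ?_
  have h0 : star x ⬝ᵥ A *ᵥ x ≠ 0 := by
    rw [Ne, hA.dotProduct_mulVec_zero_iff]
    intro h
    apply hx
    have := congrArg (fun v => A⁻¹ *ᵥ v) h
    simpa [Matrix.mulVec_mulVec,
      Matrix.nonsing_inv_mul A ((Matrix.isUnit_iff_isUnit_det A).mp hu)] using this
  exact lt_of_le_of_ne (hA.dotProduct_mulVec_nonneg x) (Ne.symm h0)

section ProjFacts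

variable {n pp : ℕ} (M : Matrix (Fin n) (Fin pp) ℝ)

private lemma ginv_symm (h : IsUnit (Mᵀ * M)) : ((Mᵀ * M)⁻¹)ᵀ = (Mᵀ * M)⁻¹ := by
  rw [Matrix.transpose_nonsing_inv, Matrix.transpose_mul, Matrix.transpose_transpose]

private lemma proj_symm (h : IsUnit (Mᵀ * M)) :
    (M * (Mᵀ * M)⁻¹ * Mᵀ)ᵀ = M * (Mᵀ * M)⁻¹ * Mᵀ := by
  rw [Matrix.transpose_mul, Matrix.transpose_mul, Matrix.transpose_transpose,
    ginv_symm M h, Matrix.mul_assoc]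

private lemma proj_mul_self (h : IsUnit (Mᵀ * M)) :
    (M * (Mᵀ * M)⁻¹ * Mᵀ) * M = M := by
  rw [Matrix.mul_assoc (M * (Mᵀ * M)⁻¹) Mᵀ M, Matrix.mul_assoc M (Mᵀ * M)⁻¹ (Mᵀ * M),
    Matrix.nonsing_inv_mul _ ((Matrix.isUnit_iff_isUnit_det _).mp h), Matrix.mul_one]

private lemma proj_idem (h : IsUnit (Mᵀ * M)) :
    (M * (Mᵀ * M)⁻¹ * Mᵀ) * (M * (Mᵀ * M)⁻¹ * Mᵀ) = M * (Mᵀ * M)⁻¹ * Mᵀ := by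
  rw [← Matrix.mul_assoc _ (M * (Mᵀ * M)⁻¹) Mᵀ, ← Matrix.mul_assoc _ M (Mᵀ * M)⁻¹,
    proj_mul_self M h]

private lemma proj_dot_eq (h : IsUnit (Mᵀ * M)) (a : Fin n → ℝ) :
    a ⬝ᵥ ((M * (Mᵀ * M)⁻¹ * Mᵀ) *ᵥ a)
      = ((M * (Mᵀ * M)⁻¹ * Mᵀ) *ᵥ a) ⬝ᵥ ((M * (Mᵀ * M)⁻¹ * Mᵀ) *ᵥ a) := by
  rw [dot_mulVec_left, Matrix.mulVec_mulVec, proj_symm M h, proj_idem M h]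

private lemma proj_nonneg (h : IsUnit (Mᵀ * M)) (a : Fin n → ℝ) :
    0 ≤ a ⬝ᵥ ((M * (Mᵀ * M)⁻¹ * Mᵀ) *ᵥ a) := by
  rw [proj_dot_eq M h]
  exact dot_self_nonneg' _

private lemma proj_bound (h : IsUnit (Mᵀ * M)) (a : Fin n → ℝ) (x : Fin pp → ℝ) :
    (Mᵀ *ᵥ a) ⬝ᵥ x ≤ Real.sqrt (a ⬝ᵥ ((M * (Mᵀ * M)⁻¹ * Mᵀ) *ᵥ a))
      * Real.sqrt (x ⬝ᵥ ((Mᵀ * M) *ᵥ x)) := by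
  have key1 : ((M * (Mᵀ * M)⁻¹ * Mᵀ) *ᵥ a) ⬝ᵥ (M *ᵥ x) = (Mᵀ *ᵥ a) ⬝ᵥ x := by
    rw [dot_mulVec_left, Matrix.mulVec_mulVec, proj_symm M h, proj_mul_self M h,
      dot_mulVec_left, Matrix.transpose_transpose]
  have key3 : (M *ᵥ x) ⬝ᵥ (M *ᵥ x) = x ⬝ᵥ ((Mᵀ * M) *ᵥ x) := by
    rw [dot_mulVec_left, Matrix.mulVec_mulVec]
  rw [← key1, proj_dot_eq M h, ← key3]
  exact dot_le_sqrt _ _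

end ProjFacts

theorem joint_projection_le_sum_of_projections
    (n₁ n₂ p : ℕ) (hn₁ : 0 < n₁) (hn₂ : 0 < n₂) (hp : 0 < p)
    (M₁ : Matrix (Fin n₁) (Fin p) ℝ) (M₂ : Matrix (Fin n₂) (Fin p) ℝ)
    (h₁ : IsUnit (M₁ᵀ * M₁)) (h₂ : IsUnit (M₂ᵀ * M₂))
    (a₁ : Fin n₁ → ℝ) (a₂ : Fin n₂ → ℝ) :
    IsUnit (M₁ᵀ * M₁ + M₂ᵀ * M₂) ∧
      (M₁ᵀ *ᵥ a₁ + M₂ᵀ *ᵥ a₂) ⬝ᵥ ((M₁ᵀ * M₁ + M₂ᵀ * M₂)⁻¹ *ᵥ (M₁ᵀ *ᵥ a₁ + M₂ᵀ *ᵥ a₂))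
        ≤ a₁ ⬝ᵥ ((M₁ * (M₁ᵀ * M₁)⁻¹ * M₁ᵀ) *ᵥ a₁)
          + a₂ ⬝ᵥ ((M₂ * (M₂ᵀ * M₂)⁻¹ * M₂ᵀ) *ᵥ a₂) := by
  have psd₁ : (M₁ᵀ * M₁).PosSemidef := by
    simpa using Matrix.posSemidef_conjTranspose_mul_self M₁
  have psd₂ : (M₂ᵀ * M₂).PosSemidef := by
    simpa using Matrix.posSemidef_conjTranspose_mul_self M₂
  have pd₁ := posDef_of_isUnit psd₁ h₁
  have pdS : (M₁ᵀ * M₁ + M₂ᵀ * M₂).PosDef := pd₁.add_posSemidef psd₂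
  have hS : IsUnit (M₁ᵀ * M₁ + M₂ᵀ * M₂) := pdS.isUnit
  refine ⟨hS, ?_⟩
  set S := M₁ᵀ * M₁ + M₂ᵀ * M₂ with hSdef
  set b := M₁ᵀ *ᵥ a₁ + M₂ᵀ *ᵥ a₂ with hb
  set x := S⁻¹ *ᵥ b with hx
  have hdS : IsUnit S.det := (Matrix.isUnit_iff_isUnit_det S).mp hS
  have hSx : S *ᵥ x = b := by
    rw [hx, Matrix.mulVec_mulVec, Matrix.mul_nonsing_inv S hdS, Matrix.one_mulVec]
  set t := b ⬝ᵥ x with ht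
  set p₁ := a₁ ⬝ᵥ ((M₁ * (M₁ᵀ * M₁)⁻¹ * M₁ᵀ) *ᵥ a₁) with hp₁
  set p₂ := a₂ ⬝ᵥ ((M₂ * (M₂ᵀ * M₂)⁻¹ * M₂ᵀ) *ᵥ a₂) with hp₂
  set q₁ := x ⬝ᵥ ((M₁ᵀ * M₁) *ᵥ x) with hq₁
  set q₂ := x ⬝ᵥ ((M₂ᵀ * M₂) *ᵥ x) with hq₂
  have hq_sum : q₁ + q₂ = t := by
    rw [hq₁, hq₂, ht, ← dotProduct_add, ← Matrix.add_mulVec, ← hSdef, hSx,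
      dotProduct_comm]
  have hq1n : 0 ≤ q₁ := by have := psd₁.dotProduct_mulVec_nonneg x; simpa using this
  have hq2n : 0 ≤ q₂ := by have := psd₂.dotProduct_mulVec_nonneg x; simpa using this
  have hp1n : 0 ≤ p₁ := proj_nonneg M₁ h₁ a₁
  have hp2n : 0 ≤ p₂ := proj_nonneg M₂ h₂ a₂
  have htX : t ≤ Real.sqrt p₁ * Real.sqrt q₁ + Real.sqrt p₂ * Real.sqrt q₂ := by
    rw [ht, hb, add_dotProduct]
    exact add_le_add (proj_bound M₁ h₁ a₁ x) (proj_bound M₂ h₂ a₂ x)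
  have htn : 0 ≤ t := by rw [← hq_sum]; linarith
  have hsq1 := Real.sq_sqrt hq1n
  have hsq2 := Real.sq_sqrt hq2n
  have hsp1 := Real.sq_sqrt hp1n
  have hsp2 := Real.sq_sqrt hp2n
  -- (√p₁√q₁ + √p₂√q₂)² ≤ (p₁+p₂)(q₁+q₂) = (p₁+p₂)·t
  have hX2 : (Real.sqrt p₁ * Real.sqrt q₁ + Real.sqrt p₂ * Real.sqrt q₂) ^ 2
      ≤ (p₁ + p₂) * t := by
    rw [← hq_sum]
    nlinarith [sq_nonneg (Real.sqrt p₁ * Real.sqrt q₂ - Real.sqrt p₂ * Real.sqrt q₁),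
      Real.sqrt_nonneg p₁, Real.sqrt_nonneg p₂, Real.sqrt_nonneg q₁, Real.sqrt_nonneg q₂]
  rcases eq_or_lt_of_le htn with h0 | hpos
  · rw [← h0]; linarith
  · have hXn : 0 ≤ Real.sqrt p₁ * Real.sqrt q₁ + Real.sqrt p₂ * Real.sqrt q₂ := by
      positivity
    nlinarith [htX, hX2, hpos, hXn]
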